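/- Fix κ ∈ ℂ and define f^R(κ,·) : ℂ → ℂ by f^R(κ,λ) := i·e^{-iα}·Ai'(e^{-iα}λ) − κ·Ai(e^{-iα}λ). If λ ∈ ℂ satisfies both f^R(κ,λ) = 0 and ∂f^R/∂λ(κ,λ) = 0, then λ = −κ². In particular, for real κ ≥ 0 every zero λ of f^R(κ,·) with λ ≠ −κ² is a simple zero. -/

import Mathlib

noncomputable section

/-- The Airy function, defined by its entire power series. -/
def Ai (z : ℂ) : ℂ :=
  (((3 : ℝ) ^ (-(2:ℝ)/3) / Real.Gamma (2/3) : ℝ) : ℂ) *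
    ∑' k : ℕ, (∏ j ∈ Finset.range k, ((3*j+1 : ℕ) : ℂ)) * z ^ (3*k) / ((3*k).factorial : ℂ)
  + ((-((3 : ℝ) ^ (-(1:ℝ)/3)) / Real.Gamma (1/3) : ℝ) : ℂ) *
    ∑' k : ℕ, (∏ j ∈ Finset.range k, ((3*j+2 : ℕ) : ℂ)) * z ^ (3*k+1) / ((3*k+1).factorial : ℂ)

/-- The derivative of the Airy function. -/
def Ai' (z : ℂ) : ℂ := deriv Ai z

/-- The angle α = 2π/3. -/
def α : ℝ := 2 * Real.pi / 3

/-- The Robin characteristic function `f^R(κ,λ) = i e^{-iα} Ai'(e^{-iα}λ) − κ Ai(e^{-iα}λ)`. -/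
def fR (κ lam : ℂ) : ℂ :=
  Complex.I * Complex.exp (-(α:ℂ) * Complex.I) * Ai' (Complex.exp (-(α:ℂ) * Complex.I) * lam)
    - κ * Ai (Complex.exp (-(α:ℂ) * Complex.I) * lam)

namespace AiryAux

open Complex FormalMultilinearSeries

/-- Coefficients of the first Airy series. -/
def aseq : ℕ → ℂ := fun n =>
  if n % 3 = 0 then ((∏ j ∈ Finset.range (n/3), ((3*j+1 : ℕ) : ℂ)) / (n.factorial : ℂ)) else 0

/-- Coefficients of the second Airy series. -/
def bseq : ℕ → ℂ := fun n =>
  if n % 3 = 1 then ((∏ j ∈ Finset.range (n/3), ((3*j+2 : ℕ) : ℂ)) / (n.factorial : ℂ)) else 0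

/-- Coefficientwise derivative. -/
def Dseq (c : ℕ → ℂ) : ℕ → ℂ := fun n => ((n : ℂ)+1) * c (n+1)

/-- Coefficientwise shift (multiplication by `z`). -/
def Sseq (c : ℕ → ℂ) : ℕ → ℂ := fun n => if n = 0 then 0 else c (n-1)

/-- Goodness: the associated power series converges everywhere. -/
def Good (c : ℕ → ℂ) : Prop := ∀ r : NNReal, Summable (fun n => ‖c n‖ * (r:ℝ)^n)

lemma good_radius {c : ℕ → ℂ} (hc : Good c) : (ofScalars ℂ c).radius = ⊤ := by
  apply (ofScalars ℂ c).radius_eq_top_of_summable_norm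
  intro r
  simp only [ofScalars_norm]
  exact hc r

lemma prod_fact_le_a (k : ℕ) :
    (∏ j ∈ Finset.range k, (3*j+1)) * k.factorial ≤ (3*k).factorial := by
  induction k with
  | zero => simp
  | succ k ih =>
    rw [Finset.prod_range_succ, Nat.factorial_succ]
    have h3 : 3 * (k+1) = (3*k+2)+1 := by ring
    rw [h3, Nat.factorial_succ, show 3*k+2 = (3*k+1)+1 from rfl, Nat.factorial_succ,
      show 3*k+1 = (3*k)+1 from rfl, Nat.factorial_succ]
    calc (∏ j ∈ Finset.range k, (3*j+1)) * (3*k+1) * ((k+1) * k.factorial)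
        = ((∏ j ∈ Finset.range k, (3*j+1)) * k.factorial) * ((3*k+1)*(k+1)) := by ring
      _ ≤ (3*k).factorial * ((3*k+1)*(k+1)) := Nat.mul_le_mul_right _ ih
      _ ≤ (3*k).factorial * ((3*k+1)*((3*k+2)*(3*k+3))) := by
          have h4 : (3*k+1)*(k+1) ≤ (3*k+1)*((3*k+2)*(3*k+3)) :=
            Nat.mul_le_mul_left _ (by nlinarith)
          exact Nat.mul_le_mul_left _ h4
      _ = (3*k+2+1) * ((3*k+1+1) * ((3*k+1) * (3*k).factorial)) := by ring

lemma prod_fact_le_b (k : ℕ) :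
    (∏ j ∈ Finset.range k, (3*j+2)) * k.factorial ≤ (3*k+1).factorial := by
  induction k with
  | zero => simp
  | succ k ih =>
    rw [Finset.prod_range_succ, Nat.factorial_succ]
    have h3 : 3 * (k+1) + 1 = (3*k+3)+1 := by ring
    rw [h3, Nat.factorial_succ, show 3*k+3 = (3*k+2)+1 from rfl, Nat.factorial_succ,
      show 3*k+2 = (3*k+1)+1 from rfl, Nat.factorial_succ]
    calc (∏ j ∈ Finset.range k, (3*j+2)) * (3*k+2) * ((k+1) * k.factorial)
        = ((∏ j ∈ Finset.range k, (3*j+2)) * k.factorial) * ((3*k+2)*(k+1)) := by ring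
      _ ≤ (3*k+1).factorial * ((3*k+2)*(k+1)) := Nat.mul_le_mul_right _ ih
      _ ≤ (3*k+1).factorial * ((3*k+2)*((3*k+3)*(3*k+4))) := by
          have h4 : (3*k+2)*(k+1) ≤ (3*k+2)*((3*k+3)*(3*k+4)) :=
            Nat.mul_le_mul_left _ (by nlinarith)
          exact Nat.mul_le_mul_left _ h4
      _ = (3*k+3+1) * ((3*k+2+1) * ((3*k+2) * (3*k+1).factorial)) := by ring

lemma norm_aseq (n : ℕ) : ‖aseq n‖ ≤ 1 / (n/3).factorial := by
  rw [aseq]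
  split_ifs with h
  · have hc : (∏ j ∈ Finset.range (n/3), ((3*j+1 : ℕ) : ℂ))
        = (((∏ j ∈ Finset.range (n/3), (3*j+1)) : ℕ) : ℂ) := by push_cast; rfl
    rw [hc, norm_div, Complex.norm_natCast, Complex.norm_natCast]
    rw [div_le_div_iff₀ (by positivity) (by positivity), one_mul]
    have := prod_fact_le_a (n/3)
    rw [show 3 * (n/3) = n by omega] at this
    exact_mod_cast this
  · simp

lemma norm_bseq (n : ℕ) : ‖bseq n‖ ≤ 1 / (n/3).factorial := by
  rw [bseq]
  split_ifs with h
  · have hc : (∏ j ∈ Finset.range (n/3), ((3*j+2 : ℕ) : ℂ))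
        = (((∏ j ∈ Finset.range (n/3), (3*j+2)) : ℕ) : ℂ) := by push_cast; rfl
    rw [hc, norm_div, Complex.norm_natCast, Complex.norm_natCast]
    rw [div_le_div_iff₀ (by positivity) (by positivity), one_mul]
    have := prod_fact_le_b (n/3)
    rw [show 3 * (n/3) + 1 = n by omega] at this
    exact_mod_cast this
  · simp

lemma good_aseq : Good aseq := by
  intro r
  have hinj : Function.Injective (fun k : ℕ => 3 * k) := fun a b h => by
    simpa using h
  rw [← Function.Injective.summable_iff hinj ?_]
  · simp only [Function.comp_def]
    apply Summable.of_nonneg_of_le (fun k => by positivity) (fun k => ?_)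
      (Real.summable_pow_div_factorial ((r:ℝ)^3))
    calc ‖aseq (3*k)‖ * (r:ℝ)^(3*k)
        ≤ (1/(k.factorial : ℝ)) * (r:ℝ)^(3*k) := by
          have h2 := norm_aseq (3*k)
          rw [Nat.mul_div_cancel_left k (by norm_num : 0 < 3)] at h2
          exact mul_le_mul_of_nonneg_right h2 (by positivity)
      _ = ((r:ℝ)^3)^k / k.factorial := by rw [pow_mul]; ring
  · intro n hn
    have h0 : aseq n = 0 := by
      rw [aseq, if_neg]
      intro h
      exact hn ⟨n/3, by show 3*(n/3) = n; omega⟩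
    simp [Function.comp, h0]

lemma good_bseq : Good bseq := by
  intro r
  have hinj : Function.Injective (fun k : ℕ => 3 * k + 1) := fun a b h => by
    simpa using h
  rw [← Function.Injective.summable_iff hinj ?_]
  · simp only [Function.comp_def]
    apply Summable.of_nonneg_of_le (fun k => by positivity) (fun k => ?_)
      ((Real.summable_pow_div_factorial ((r:ℝ)^3)).mul_left (r:ℝ))
    calc ‖bseq (3*k+1)‖ * (r:ℝ)^(3*k+1)
        ≤ (1/(k.factorial : ℝ)) * (r:ℝ)^(3*k+1) := by
          have h2 := norm_bseq (3*k+1)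
          rw [show (3*k+1)/3 = k by omega] at h2
          exact mul_le_mul_of_nonneg_right h2 (by positivity)
      _ = (r:ℝ) * (((r:ℝ)^3)^k / k.factorial) := by rw [pow_succ, pow_mul]; ring
  · intro n hn
    have h0 : bseq n = 0 := by
      rw [bseq, if_neg]
      intro h
      exact hn ⟨n/3, by show 3*(n/3)+1 = n; omega⟩
    simp [Function.comp, h0]

lemma good_D {c : ℕ → ℂ} (hc : Good c) : Good (Dseq c) := by
  intro r
  have h := hc (r+1)
  have h1 : Summable (fun n => ‖c (n+1)‖ * ((r:ℝ)+1)^(n+1)) := by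
    have := (summable_nat_add_iff 1).mpr h
    simpa using this
  apply Summable.of_nonneg_of_le (fun n => by positivity) (fun n => ?_) h1
  have hb : ((n:ℝ)+1) * (r:ℝ)^n ≤ ((r:ℝ)+1)^(n+1) := by
    rw [add_pow]
    have hmem : n ∈ Finset.range (n+1+1) := Finset.mem_range.mpr (by omega)
    have := Finset.single_le_sum
      (f := fun k => (r:ℝ)^k * 1^(n+1-k) * ((n+1).choose k : ℝ))
      (fun i _ => by positivity) hmem
    simpa [Nat.choose_succ_self_right, mul_comm] using this
  have hnorm : ‖Dseq c n‖ = ((n:ℝ)+1) * ‖c (n+1)‖ := by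
    rw [Dseq, norm_mul, show ((n:ℂ)+1) = ((n+1 : ℕ) : ℂ) by push_cast; ring,
      Complex.norm_natCast]
    push_cast
    ring
  calc ‖Dseq c n‖ * (r:ℝ)^n = ‖c (n+1)‖ * (((n:ℝ)+1) * (r:ℝ)^n) := by rw [hnorm]; ring
    _ ≤ ‖c (n+1)‖ * ((r:ℝ)+1)^(n+1) := by gcongr

lemma mem_ball_top {c : ℕ → ℂ} (hc : Good c) (z : ℂ) :
    z ∈ EMetric.ball (0:ℂ) (ofScalars ℂ c).radius := by
  rw [good_radius hc]
  exact EMetric.mem_ball.mpr (edist_lt_top z 0)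

lemma gsum_hasSum {c : ℕ → ℂ} (hc : Good c) (z : ℂ) :
    HasSum (fun n => c n • z ^ n) (ofScalarsSum c z) := by
  have h := (ofScalars ℂ c).hasFPowerSeriesOnBall
    (by rw [good_radius hc]; exact ENNReal.zero_lt_top)
  have h2 := h.hasSum (mem_ball_top hc z)
  rw [zero_add] at h2
  have h3 : (fun n => (ofScalars ℂ c) n (fun _ => z)) = fun n => c n • z ^ n := by
    funext n
    exact ofScalars_apply_eq c z n
  rw [h3] at h2
  exact h2

lemma gsum_analytic {c : ℕ → ℂ} (hc : Good c) :
    AnalyticOnNhd ℂ (ofScalarsSum c : ℂ → ℂ) Set.univ := by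
  have h := (ofScalars ℂ c).hasFPowerSeriesOnBall
    (by rw [good_radius hc]; exact ENNReal.zero_lt_top)
  have h2 := h.analyticOnNhd
  intro x _
  exact h2 x (mem_ball_top hc x)

lemma deriv_gsum {c : ℕ → ℂ} (hc : Good c) :
    deriv (ofScalarsSum c : ℂ → ℂ) = ofScalarsSum (Dseq c) := by
  have h := (ofScalars ℂ c).hasFPowerSeriesOnBall
    (by rw [good_radius hc]; exact ENNReal.zero_lt_top)
  have hfd := h.fderiv
  -- pointwise equality away from 0
  have key : ∀ z : ℂ, z ≠ 0 → deriv (ofScalarsSum c : ℂ → ℂ) z = ofScalarsSum (Dseq c) z := by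
    intro z hz
    have hs := hfd.hasSum (y := z) (mem_ball_top hc z)
    rw [zero_add] at hs
    have hs2 := hs.mapL (ContinuousLinearMap.apply ℂ ℂ z)
    have hterm : (fun n => (ContinuousLinearMap.apply ℂ ℂ z)
        ((ofScalars ℂ c).derivSeries n (fun _ => z)))
        = fun n => (Dseq c n • z ^ n) * z := by
      funext n
      have := (ofScalars ℂ c).derivSeries_apply_diag n z
      simp only [ContinuousLinearMap.apply_apply]
      rw [this, ofScalars_apply_eq]
      simp only [Dseq, smul_eq_mul, nsmul_eq_mul]
      push_cast
      ring
    rw [hterm] at hs2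
    have hq := (gsum_hasSum (good_D hc) z).mul_right z
    have heq := hs2.unique hq
    have hself : (ContinuousLinearMap.apply ℂ ℂ z) (fderiv ℂ (ofScalars ℂ c).sum z)
        = z * deriv (ofScalars ℂ c).sum z := by
      have hz1 : (fderiv ℂ (ofScalars ℂ c).sum z) z
          = (fderiv ℂ (ofScalars ℂ c).sum z) (z • (1:ℂ)) := by norm_num
      rw [ContinuousLinearMap.apply_apply, hz1, map_smul, smul_eq_mul, fderiv_apply_one_eq_deriv]
    rw [hself] at heq
    have hfin : z * deriv (ofScalars ℂ c).sum z = z * ofScalarsSum (Dseq c) z := by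
      rw [heq]; ring
    exact mul_left_cancel₀ hz hfin
  -- continuity on both sides
  have hca : Continuous (deriv (ofScalarsSum c : ℂ → ℂ)) := by
    apply continuous_iff_continuousAt.mpr
    intro x
    exact ((gsum_analytic hc).deriv x (Set.mem_univ x)).continuousAt
  have hcb : Continuous (ofScalarsSum (Dseq c) : ℂ → ℂ) := by
    apply continuous_iff_continuousAt.mpr
    intro x
    exact ((gsum_analytic (good_D hc)) x (Set.mem_univ x)).continuousAt
  exact Continuous.ext_on (dense_compl_singleton (0:ℂ)) hca hcb (fun z hz => key z hz)

lemma hasDerivAt_gsum {c : ℕ → ℂ} (hc : Good c) (z : ℂ) :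
    HasDerivAt (ofScalarsSum c) (ofScalarsSum (Dseq c) z) z := by
  have hd : DifferentiableAt ℂ (ofScalarsSum c : ℂ → ℂ) z :=
    ((gsum_analytic hc) z (Set.mem_univ z)).differentiableAt
  have := hd.hasDerivAt
  rwa [deriv_gsum hc] at this

lemma gsum_S {c : ℕ → ℂ} (hc : Good c) (z : ℂ) :
    ofScalarsSum (Sseq c) z = z * ofScalarsSum c z := by
  have h1 := (gsum_hasSum hc z).mul_right z
  have h2 : (fun n => (c n • z ^ n) * z) = fun n => Sseq c (n+1) • z ^ (n+1) := by
    funext n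
    simp only [Sseq, smul_eq_mul, pow_succ]
    norm_num
    ring
  rw [h2] at h1
  have h3 := (hasSum_nat_add_iff (f := fun n => Sseq c n • z ^ n) 1).mp h1
  have h4 : ∑ i ∈ Finset.range 1, Sseq c i • z ^ i = 0 := by simp [Sseq]
  rw [h4, add_zero] at h3
  rw [ofScalars_sum_eq, h3.tsum_eq, mul_comm]

lemma DD_aseq : Dseq (Dseq aseq) = Sseq aseq := by
  funext n
  have h3 : n % 3 = 0 ∨ n % 3 = 1 ∨ n % 3 = 2 := by omega
  rcases h3 with h | h | h
  · have h2 : aseq (n+1+1) = 0 := by rw [aseq, if_neg (by omega)]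
    have hS : Sseq aseq n = 0 := by
      rw [Sseq]
      split_ifs with h0
      · rfl
      · rw [aseq, if_neg (by omega)]
    simp [Dseq, h2, hS]
  · obtain ⟨k, hk⟩ : ∃ k, n = 3*k+1 := ⟨n/3, by omega⟩
    subst hk
    have hidx : 3*k+1+1+1 = 3*(k+1) := by ring
    have hFn : (3*(k+1)).factorial = (3*k+3) * ((3*k+2) * ((3*k+1) * (3*k).factorial)) := by
      rw [show 3*(k+1) = (3*k+2)+1 by ring, Nat.factorial_succ,
        show 3*k+2 = (3*k+1)+1 from rfl, Nat.factorial_succ,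
        show 3*k+1 = (3*k)+1 from rfl, Nat.factorial_succ]
    have hne0 : (((3*k).factorial : ℕ) : ℂ) ≠ 0 :=
      Nat.cast_ne_zero.mpr (Nat.factorial_ne_zero _)
    have hne1 : (((3*(k+1)).factorial : ℕ) : ℂ) ≠ 0 :=
      Nat.cast_ne_zero.mpr (Nat.factorial_ne_zero _)
    have hA2 : aseq (3*k+1+1+1) = (∏ j ∈ Finset.range (k+1), ((3*j+1 : ℕ) : ℂ))
        / (((3*(k+1)).factorial : ℕ) : ℂ) := by
      rw [hidx, aseq, if_pos (by omega), Nat.mul_div_cancel_left _ (by norm_num : 0 < 3)]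
    have hS : Sseq aseq (3*k+1) = (∏ j ∈ Finset.range k, ((3*j+1 : ℕ) : ℂ))
        / (((3*k).factorial : ℕ) : ℂ) := by
      rw [Sseq, if_neg (by omega), show 3*k+1-1 = 3*k from rfl, aseq, if_pos (by omega),
        Nat.mul_div_cancel_left _ (by norm_num : 0 < 3)]
    rw [Dseq, Dseq, hA2, hS]
    rw [Finset.prod_range_succ]
    field_simp
    rw [hFn]
    push_cast
    ring
  · obtain ⟨k, hk⟩ : ∃ k, n = 3*k+2 := ⟨n/3, by omega⟩
    subst hk
    have h2 : aseq (3*k+2+1+1) = 0 := by rw [aseq, if_neg (by omega)]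
    have hS : Sseq aseq (3*k+2) = 0 := by
      rw [Sseq, if_neg (by omega), show 3*k+2-1 = 3*k+1 from rfl, aseq, if_neg (by omega)]
    simp [Dseq, h2, hS]

lemma DD_bseq : Dseq (Dseq bseq) = Sseq bseq := by
  funext n
  have h3 : n % 3 = 0 ∨ n % 3 = 1 ∨ n % 3 = 2 := by omega
  rcases h3 with h | h | h
  · have h2 : bseq (n+1+1) = 0 := by rw [bseq, if_neg (by omega)]
    have hS : Sseq bseq n = 0 := by
      rw [Sseq]
      split_ifs with h0
      · rfl
      · rw [bseq, if_neg (by omega)]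
    simp [Dseq, h2, hS]
  · obtain ⟨k, hk⟩ : ∃ k, n = 3*k+1 := ⟨n/3, by omega⟩
    subst hk
    have h2 : bseq (3*k+1+1+1) = 0 := by rw [bseq, if_neg (by omega)]
    have hS : Sseq bseq (3*k+1) = 0 := by
      rw [Sseq, if_neg (by omega), show 3*k+1-1 = 3*k from rfl, bseq, if_neg (by omega)]
    simp [Dseq, h2, hS]
  · obtain ⟨k, hk⟩ : ∃ k, n = 3*k+2 := ⟨n/3, by omega⟩
    subst hk
    have hidx : 3*k+2+1+1 = 3*(k+1)+1 := by ring
    have hFn : (3*(k+1)+1).factorial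
        = (3*k+4) * ((3*k+3) * ((3*k+2) * (3*k+1).factorial)) := by
      rw [show 3*(k+1)+1 = (3*k+3)+1 by ring, Nat.factorial_succ,
        show 3*k+3 = (3*k+2)+1 from rfl, Nat.factorial_succ,
        show 3*k+2 = (3*k+1)+1 from rfl, Nat.factorial_succ]
    have hne0 : (((3*k+1).factorial : ℕ) : ℂ) ≠ 0 :=
      Nat.cast_ne_zero.mpr (Nat.factorial_ne_zero _)
    have hne1 : (((3*(k+1)+1).factorial : ℕ) : ℂ) ≠ 0 :=
      Nat.cast_ne_zero.mpr (Nat.factorial_ne_zero _)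
    have hB2 : bseq (3*k+2+1+1) = (∏ j ∈ Finset.range (k+1), ((3*j+2 : ℕ) : ℂ))
        / (((3*(k+1)+1).factorial : ℕ) : ℂ) := by
      rw [hidx, bseq, if_pos (by omega), show (3*(k+1)+1)/3 = k+1 by omega]
    have hS : Sseq bseq (3*k+2) = (∏ j ∈ Finset.range k, ((3*j+2 : ℕ) : ℂ))
        / (((3*k+1).factorial : ℕ) : ℂ) := by
      rw [Sseq, if_neg (by omega), show 3*k+2-1 = 3*k+1 from rfl, bseq, if_pos (by omega),
        show (3*k+1)/3 = k by omega]
    rw [Dseq, Dseq, hB2, hS]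
    rw [Finset.prod_range_succ]
    field_simp
    rw [hFn]
    push_cast
    ring

/-- The constants. -/
def A : ℝ := (3 : ℝ) ^ (-(2:ℝ)/3) / Real.Gamma (2/3)
def B : ℝ := -((3 : ℝ) ^ (-(1:ℝ)/3)) / Real.Gamma (1/3)

lemma gsumA_eq (z : ℂ) : ofScalarsSum aseq z
    = ∑' k : ℕ, (∏ j ∈ Finset.range k, ((3*j+1 : ℕ) : ℂ)) * z ^ (3*k) / ((3*k).factorial : ℂ) := by
  have hinj : Function.Injective (fun k : ℕ => 3 * k) := fun a b h => by simpa using h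
  have hsupp : Function.support (fun n => aseq n • z ^ n) ⊆ Set.range (fun k : ℕ => 3 * k) := by
    intro n hn
    have hne : aseq n ≠ 0 := by
      intro h0
      apply hn
      simp [h0]
    have hmod : n % 3 = 0 := by
      by_contra hm
      exact hne (by rw [aseq, if_neg hm])
    exact ⟨n/3, by show 3*(n/3) = n; omega⟩
  rw [ofScalars_sum_eq, ← Function.Injective.tsum_eq hinj hsupp]
  apply tsum_congr
  intro k
  show aseq (3*k) • z ^ (3*k) = _
  rw [aseq, if_pos (by omega), Nat.mul_div_cancel_left _ (by norm_num : 0 < 3), smul_eq_mul]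
  ring

lemma gsumB_eq (z : ℂ) : ofScalarsSum bseq z
    = ∑' k : ℕ, (∏ j ∈ Finset.range k, ((3*j+2 : ℕ) : ℂ)) * z ^ (3*k+1) / ((3*k+1).factorial : ℂ) := by
  have hinj : Function.Injective (fun k : ℕ => 3 * k + 1) := fun a b h => by simpa using h
  have hsupp : Function.support (fun n => bseq n • z ^ n) ⊆ Set.range (fun k : ℕ => 3 * k + 1) := by
    intro n hn
    have hne : bseq n ≠ 0 := by
      intro h0
      apply hn
      simp [h0]
    have hmod : n % 3 = 1 := by
      by_contra hm
      exact hne (by rw [bseq, if_neg hm])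
    exact ⟨n/3, by show 3*(n/3)+1 = n; omega⟩
  rw [ofScalars_sum_eq, ← Function.Injective.tsum_eq hinj hsupp]
  apply tsum_congr
  intro k
  show bseq (3*k+1) • z ^ (3*k+1) = _
  rw [bseq, if_pos (by omega), show (3*k+1)/3 = k by omega, smul_eq_mul]
  ring

lemma Ai_eq : Ai = fun z => (A:ℂ) * ofScalarsSum aseq z + (B:ℂ) * ofScalarsSum bseq z := by
  funext z
  rw [Ai, gsumA_eq, gsumB_eq]
  simp only [A, B]

lemma hasDerivAt_Ai (z : ℂ) :
    HasDerivAt Ai ((A:ℂ) * ofScalarsSum (Dseq aseq) z + (B:ℂ) * ofScalarsSum (Dseq bseq) z) z := by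
  rw [Ai_eq]
  exact ((hasDerivAt_gsum good_aseq z).const_mul (A:ℂ)).add
    ((hasDerivAt_gsum good_bseq z).const_mul (B:ℂ))

lemma Ai'_eq :
    Ai' = fun z => (A:ℂ) * ofScalarsSum (Dseq aseq) z + (B:ℂ) * ofScalarsSum (Dseq bseq) z := by
  funext z
  exact (hasDerivAt_Ai z).deriv

lemma hasDerivAt_Ai' (z : ℂ) : HasDerivAt Ai' (z * Ai z) z := by
  rw [Ai'_eq]
  have h := ((hasDerivAt_gsum (good_D good_aseq) z).const_mul (A:ℂ)).add
    ((hasDerivAt_gsum (good_D good_bseq) z).const_mul (B:ℂ))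
  refine h.congr_deriv ?_
  rw [DD_aseq, DD_bseq, gsum_S good_aseq z, gsum_S good_bseq z]
  rw [Ai_eq]
  ring

lemma Ai_zero : Ai 0 = (A : ℂ) := by
  rw [Ai_eq]
  simp only
  rw [ofScalarsSum_zero, ofScalarsSum_zero]
  have ha : aseq 0 = 1 := by
    rw [aseq, if_pos rfl]
    simp
  have hb : bseq 0 = 0 := by rw [bseq, if_neg (by omega)]
  rw [ha, hb]
  simp

lemma A_ne_zero : (A : ℂ) ≠ 0 := by
  have hpos : 0 < A := by
    apply div_pos
    · exact Real.rpow_pos_of_pos (by norm_num) _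
    · exact Real.Gamma_pos_of_pos (by norm_num)
  exact Complex.ofReal_ne_zero.mpr (ne_of_gt hpos)

lemma Ai_analytic : AnalyticOnNhd ℂ Ai Set.univ := by
  rw [Ai_eq]
  intro x _
  exact (analyticAt_const.mul ((gsum_analytic good_aseq) x trivial)).add
    (analyticAt_const.mul ((gsum_analytic good_bseq) x trivial))

lemma iter_analytic (n : ℕ) : AnalyticOnNhd ℂ (iteratedDeriv n Ai) Set.univ := by
  induction n with
  | zero => simpa [iteratedDeriv_zero] using Ai_analytic
  | succ n ih =>
    rw [iteratedDeriv_succ]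
    exact ih.deriv

lemma iter_diff (n : ℕ) : Differentiable ℂ (iteratedDeriv n Ai) :=
  fun x => ((iter_analytic n) x trivial).differentiableAt

lemma leibniz (n : ℕ) : iteratedDeriv n (fun z : ℂ => z * Ai z)
    = fun z => z * iteratedDeriv n Ai z + (n:ℂ) * iteratedDeriv (n-1) Ai z := by
  induction n with
  | zero =>
    funext z
    simp [iteratedDeriv_zero]
  | succ n ih =>
    rw [iteratedDeriv_succ, ih]
    funext z
    have hg := ((iter_diff n) z).hasDerivAt
    have hh := ((iter_diff (n-1)) z).hasDerivAt
    have hd : HasDerivAt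
        (fun z : ℂ => z * iteratedDeriv n Ai z + (n:ℂ) * iteratedDeriv (n-1) Ai z)
        ((1 * iteratedDeriv n Ai z + z * deriv (iteratedDeriv n Ai) z)
          + (n:ℂ) * deriv (iteratedDeriv (n-1) Ai) z) z :=
      ((hasDerivAt_id z).mul hg).add (hh.const_mul (n:ℂ))
    rw [hd.deriv, ← iteratedDeriv_succ, ← iteratedDeriv_succ]
    cases n with
    | zero =>
      simp only [Nat.zero_sub, Nat.cast_zero, Nat.cast_one, Nat.zero_add]
      push_cast
      ring
    | succ m =>
      simp only [Nat.succ_sub_one]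
      push_cast
      ring

lemma deriv_Ai'_eq : deriv Ai' = fun z => z * Ai z :=
  funext fun z => (hasDerivAt_Ai' z).deriv

lemma iter_vanish (w : ℂ) (h0 : Ai w = 0) (h1 : Ai' w = 0) :
    ∀ n, iteratedDeriv n Ai w = 0 := by
  intro n
  induction n using Nat.strong_induction_on with
  | _ n ih =>
    match n, ih with
    | 0, _ => simpa [iteratedDeriv_zero] using h0
    | 1, _ => simpa [iteratedDeriv_one, Ai'] using h1
    | (m+2), ih =>
      have hAi' : deriv Ai = Ai' := rfl
      have hit : iteratedDeriv (m+2) Ai = iteratedDeriv m (fun z : ℂ => z * Ai z) := by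
        rw [show m+2 = (m+1)+1 from rfl, iteratedDeriv_succ', iteratedDeriv_succ', hAi',
          deriv_Ai'_eq]
      rw [hit, leibniz m]
      simp only
      rw [ih m (by omega), ih (m-1) (by omega)]
      simp

lemma no_common_zero (w : ℂ) (h0 : Ai w = 0) (h1 : Ai' w = 0) : False := by
  have hvan := iter_vanish w h0 h1
  obtain ⟨p, r, hr⟩ := Ai_analytic w trivial
  have hloc : ∀ y ∈ EMetric.ball (0:ℂ) r, Ai (w + y) = 0 := by
    intro y hy
    have hsum := hr.hasSum hy
    have hzero : ∀ n, (p n fun _ => y) = 0 := by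
      intro n
      have hf := hr.factorial_smul y n
      have hrhs : iteratedFDeriv ℂ n Ai w (fun _ => y) = 0 := by
        rw [iteratedFDeriv_apply_eq_iteratedDeriv_mul_prod, hvan n, smul_zero]
      rw [hrhs] at hf
      rcases smul_eq_zero.mp hf with h | h
      · exact absurd h (Nat.factorial_ne_zero n)
      · exact h
    have hzsum : HasSum (fun _ : ℕ => (0:ℂ)) (Ai (w+y)) := by
      simpa [hzero] using hsum
    simpa using hzsum.unique hasSum_zero
  have hev : Ai =ᶠ[nhds w] (0 : ℂ → ℂ) := by
    filter_upwards [EMetric.ball_mem_nhds w hr.r_pos] with z hz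
    have hz' : z - w ∈ Metric.eball (0:ℂ) r := by
      rw [Metric.mem_eball, edist_eq_enorm_sub, sub_zero]
      rw [Metric.mem_eball, edist_eq_enorm_sub] at hz
      exact hz
    have := hloc (z - w) hz'
    simpa using this
  have hzero := Ai_analytic.eqOn_zero_of_preconnected_of_eventuallyEq_zero
    isPreconnected_univ (Set.mem_univ w) hev
  have h00 : Ai 0 = 0 := hzero (Set.mem_univ 0)
  rw [Ai_zero] at h00
  exact A_ne_zero h00

lemma robin_aux (κ : ℂ) (lam : ℂ) (hf : fR κ lam = 0) (hd : deriv (fR κ) lam = 0) :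
    lam = -κ ^ 2 := by
  set ω : ℂ := Complex.exp (-(α:ℂ) * Complex.I) with hω
  have hω0 : ω ≠ 0 := Complex.exp_ne_zero _
  have hα : ((α:ℝ):ℂ) = 2 * (Real.pi:ℂ) / 3 := by
    rw [show α = 2 * Real.pi / 3 from rfl]
    push_cast
    ring
  have hω3 : ω^3 = 1 := by
    rw [hω, ← Complex.exp_nat_mul]
    rw [show ((3:ℕ):ℂ) * (-(α:ℂ) * Complex.I) = (-1 : ℤ) * (2 * (Real.pi:ℂ) * Complex.I) by
      rw [hα]; push_cast; ring]
    exact Complex.exp_int_mul_two_pi_mul_I (-1)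
  have hin : HasDerivAt (fun l : ℂ => ω * l) ω lam := by
    simpa using (hasDerivAt_id lam).const_mul ω
  have hAiu : HasDerivAt Ai (Ai' (ω * lam)) (ω * lam) :=
    (hasDerivAt_Ai (ω*lam)).differentiableAt.hasDerivAt
  have h1 : HasDerivAt (fun l : ℂ => Ai (ω * l)) (Ai' (ω*lam) * ω) lam :=
    hAiu.comp lam hin
  have h2 : HasDerivAt (fun l : ℂ => Ai' (ω * l)) (((ω*lam) * Ai (ω*lam)) * ω) lam :=
    (hasDerivAt_Ai' (ω*lam)).comp lam hin
  have hfR : HasDerivAt (fR κ)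
      (Complex.I * ω * (((ω*lam) * Ai (ω*lam)) * ω) - κ * (Ai' (ω*lam) * ω)) lam :=
    (h2.const_mul (Complex.I * ω)).sub (h1.const_mul κ)
  have hf' : Complex.I * ω * Ai' (ω*lam) - κ * Ai (ω*lam) = 0 := hf
  have hd' : Complex.I * ω * (((ω*lam) * Ai (ω*lam)) * ω) - κ * (Ai' (ω*lam) * ω) = 0 := by
    rw [← hfR.deriv]
    exact hd
  have hu : Ai (ω * lam) ≠ 0 := by
    intro hz0
    have hf'' := hf'
    rw [hz0, mul_zero, sub_zero] at hf''
    rcases mul_eq_zero.mp hf'' with h | h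
    · rcases mul_eq_zero.mp h with h' | h'
      · exact Complex.I_ne_zero h'
      · exact hω0 h'
    · exact no_common_zero _ hz0 h
  have key : Complex.I * (lam + κ^2) * Ai (ω*lam) = 0 := by
    linear_combination hd' - Complex.I * κ * hf' - (Complex.I * lam * Ai (ω*lam)) * hω3
      + (κ * ω * Ai' (ω*lam)) * Complex.I_sq
  rcases mul_eq_zero.mp key with h | h
  · rcases mul_eq_zero.mp h with h' | h'
    · exact absurd h' Complex.I_ne_zero
    · linear_combination h'
  · exact absurd h hu

end AiryAux

/-- If `λ` is a common zero of `f^R(κ,·)` and its derivative, then `λ = −κ²`.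
In particular, for real `κ ≥ 0`, every zero `λ ≠ −κ²` of `f^R(κ,·)` is simple. -/
theorem robin_zeros_simple (κ : ℂ) :
    (∀ lam : ℂ, fR κ lam = 0 → deriv (fR κ) lam = 0 → lam = -κ ^ 2) ∧
    (∀ κ' : ℝ, 0 ≤ κ' → ∀ lam : ℂ, fR (κ' : ℂ) lam = 0 → lam ≠ -(κ' : ℂ) ^ 2 →
      deriv (fR (κ' : ℂ)) lam ≠ 0) := by
  refine ⟨fun lam hf hd => AiryAux.robin_aux κ lam hf hd, ?_⟩
  intro κ' _ lam hf hne hd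
  exact hne (AiryAux.robin_aux (κ' : ℂ) lam hf hd)

end
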